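/- Let F be a field, let a ∈ F, and let (p_ℓ)_{ℓ∈ℤ}, (q_ℓ)_{ℓ∈ℤ} be families of nonzero elements of F. Define a^{(s,t)}_n = [p]_{s+1}^{s+n} · (1 − a·[p]_1^s·[q]_1^{t+n}) and b^{(s,t)}_n = a·[p]_1^{s+n−1}·[q]_1^t·(1 − [q]_{t+1}^{t+n}) for (s,t) ∈ ℤ² and n ∈ ℤ_{≥0}. Then (a,b) is a solution to the discrete 2D Toda molecule: b^{(s,t)}_0 = 0 and, for all (s,t) ∈ ℤ² and n ≥ 0, a^{(s,t+1)}_n + b^{(s+1,t)}_n = a^{(s,t)}_n + b^{(s,t)}_{n+1} and a^{(s,t+1)}_n · b^{(s+1,t)}_{n+1} = a^{(s,t)}_{n+1} · b^{(s,t)}_{n+1}. -/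

import Mathlib

/-- A solution to the discrete 2D Toda molecule. -/
def IsTodaSolution {F : Type*} [Field F] (a b : ℤ → ℤ → ℕ → F) : Prop :=
  (∀ (s t : ℤ) (n : ℕ), a s (t + 1) n + b (s + 1) t n = a s t n + b s t (n + 1)) ∧
  (∀ (s t : ℤ) (n : ℕ), a s (t + 1) n * b (s + 1) t (n + 1) = a s t (n + 1) * b s t (n + 1)) ∧
  (∀ s t : ℤ, b s t 0 = 0)

/-- The solution is non-vanishing: `a` nonzero for all `n ≥ 0`, `b` nonzero for all `n ≥ 1`. -/
def NonVanishing {F : Type*} [Field F] (a b : ℤ → ℤ → ℕ → F) : Prop :=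
  (∀ (s t : ℤ) (n : ℕ), a s t n ≠ 0) ∧ (∀ (s t : ℤ) (n : ℕ), b s t (n + 1) ≠ 0)

/-- `gprod z m n = [z]_m^n`: `∏_{l=m}^{n} z_l` if `m ≤ n`, `1` if `m = n + 1`, and
`(∏_{l=n+1}^{m-1} z_l)⁻¹` if `m ≥ n + 2`. -/
noncomputable def gprod {F : Type*} [Field F] (z : ℤ → F) (m n : ℤ) : F :=
  if m ≤ n + 1 then ∏ l ∈ Finset.Icc m n, z l
  else (∏ l ∈ Finset.Icc (n + 1) (m - 1), z l)⁻¹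

section auxLemmas
variable {F : Type*} [Field F]

lemma gprod_succ (z : ℤ → F) (hz : ∀ l, z l ≠ 0) (m n : ℤ) :
    gprod z m (n + 1) = gprod z m n * z (n + 1) := by
  unfold gprod
  rcases lt_trichotomy m (n + 2) with h | h | h
  · rw [if_pos (by omega), if_pos (by omega),
      show Finset.Icc m (n+1) = insert (n+1) (Finset.Icc m n) by
        ext x; simp [Finset.mem_Icc]; omega,
      Finset.prod_insert (by simp)]
    ring
  · subst h
    rw [if_pos (by omega), if_neg (by omega)]
    rw [show n + 2 - 1 = n + 1 by ring, Finset.Icc_self, Finset.prod_singleton,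
      Finset.Icc_eq_empty (by omega), Finset.prod_empty,
      inv_mul_cancel₀ (hz (n+1))]
  · rw [if_neg (by omega), if_neg (by omega),
      show Finset.Icc (n+1) (m-1) = insert (n+1) (Finset.Icc (n+1+1) (m-1)) by
        ext x; simp [Finset.mem_Icc]; omega,
      Finset.prod_insert (by simp), show n + 1 + 1 = n + 2 by ring, mul_inv,
      mul_comm (z (n+1))⁻¹, mul_assoc, inv_mul_cancel₀ (hz (n+1)), mul_one]

lemma gprod_ne_zero (z : ℤ → F) (hz : ∀ l, z l ≠ 0) (m n : ℤ) :
    gprod z m n ≠ 0 := by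
  unfold gprod
  split
  · exact Finset.prod_ne_zero_iff.2 fun i _ => hz i
  · exact inv_ne_zero (Finset.prod_ne_zero_iff.2 fun i _ => hz i)

lemma gprod_triv (z : ℤ → F) (m : ℤ) : gprod z m (m - 1) = 1 := by
  unfold gprod
  rw [if_pos (by omega), Finset.Icc_eq_empty (by omega)]; simp

lemma gprod_eq (z : ℤ → F) (hz : ∀ l, z l ≠ 0) (m n : ℤ) :
    gprod z m n = gprod z 1 n * (gprod z 1 (m - 1))⁻¹ := by
  induction n using Int.inductionOn' (b := m - 1) with
  | zero => rw [gprod_triv, mul_inv_cancel₀ (gprod_ne_zero z hz 1 (m-1))]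
  | succ k _ ih =>
    rw [gprod_succ z hz, gprod_succ z hz, ih]; ring
  | pred k _ ih =>
    have h1 := gprod_succ z hz m (k - 1)
    have h2 := gprod_succ z hz 1 (k - 1)
    simp only [sub_add_cancel] at h1 h2
    rw [h1, h2] at ih
    exact mul_right_cancel₀ (hz k) (by linear_combination ih)

end auxLemmas

/-- For any `a ∈ F` and nonzero families `(p_l)`, `(q_l)`,
`a^{(s,t)}_n = [p]_{s+1}^{s+n} (1 - a [p]_1^s [q]_1^{t+n})` and
`b^{(s,t)}_n = a [p]_1^{s+n-1} [q]_1^t (1 - [q]_{t+1}^{t+n})` solve the discrete 2D Toda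
molecule. -/
theorem toda_solution_pq {F : Type*} [Field F] (A : F) (p q : ℤ → F)
    (hp : ∀ l : ℤ, p l ≠ 0) (hq : ∀ l : ℤ, q l ≠ 0) :
    IsTodaSolution
      (fun s t n => gprod p (s + 1) (s + n) * (1 - A * gprod p 1 s * gprod q 1 (t + n)))
      (fun s t n =>
        A * gprod p 1 (s + n - 1) * gprod q 1 t * (1 - gprod q (t + 1) (t + n))) := by
  refine ⟨fun s t n => ?_, fun s t n => ?_, fun s t => ?_⟩
  · simp only []
    push_cast
    rw [show t + 1 + (n:ℤ) = t + (n:ℤ) + 1 by ring,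
      show s + 1 + (n:ℤ) - 1 = s + (n:ℤ) by ring,
      show s + ((n:ℤ) + 1) - 1 = s + (n:ℤ) by ring,
      show t + ((n:ℤ) + 1) = t + (n:ℤ) + 1 by ring]
    simp only [gprod_eq p hp (s+1), gprod_eq q hq (t+1), add_sub_cancel_right]
    have h1 := gprod_ne_zero p hp 1 s
    have h2 := gprod_ne_zero q hq 1 t
    field_simp
    ring
  · simp only []
    push_cast
    rw [show t + 1 + (n:ℤ) = t + (n:ℤ) + 1 by ring,
      show s + 1 + ((n:ℤ) + 1) - 1 = s + (n:ℤ) + 1 by ring,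
      show s + ((n:ℤ) + 1) - 1 = s + (n:ℤ) by ring,
      show t + ((n:ℤ) + 1) = t + (n:ℤ) + 1 by ring,
      show s + ((n:ℤ) + 1) = s + (n:ℤ) + 1 by ring]
    simp only [gprod_eq p hp (s+1), gprod_eq q hq (t+1), add_sub_cancel_right]
    have h1 := gprod_ne_zero p hp 1 s
    have h2 := gprod_ne_zero q hq 1 t
    field_simp
  · simp only [Nat.cast_zero, add_zero]
    have h : gprod q (t + 1) t = 1 := by
      have := gprod_triv q (t + 1); rwa [show t + 1 - 1 = t by ring] at this
    rw [h]; simp
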